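/- If A, B ⊆ ℝⁿ are closed, convex, origin-symmetric sets each of which is 1-unconditional with respect to the standard basis (i.e. (x₁,…,xₙ) ∈ A iff (±x₁,…,±xₙ) ∈ A for all sign choices, and similarly for B), then μₙ(A∩B) ≥ μₙ(A)·μₙ(B). -/

import Mathlib

open MeasureTheory Real Pointwise
noncomputable def stdGaussian (n : ℕ) : Measure (EuclideanSpace ℝ (Fin n)) :=
  volume.withDensity fun x => ENNReal.ofReal ((2 * π) ^ (-(n : ℝ) / 2) * Real.exp (-‖x‖ ^ 2 / 2))

open scoped ENNReal NNReal

section Cheb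
variable {ν : Measure ℝ} [IsProbabilityMeasure ν]

lemma integrable_of_bdd {α : Type*} [MeasurableSpace α] {μ : Measure α}
    [IsFiniteMeasure μ] {F : α → ℝ} (hF : Measurable F) (h : ∀ x, |F x| ≤ 1) :
    Integrable F μ :=
  (integrable_const (1:ℝ)).mono' hF.aestronglyMeasurable
    (Filter.Eventually.of_forall fun x => by simpa using h x)

lemma cheb {f g : ℝ → ℝ} (hf : Measurable f) (hg : Measurable g)
    (hf0 : ∀ t, 0 ≤ f t) (hf1 : ∀ t, f t ≤ 1) (hg0 : ∀ t, 0 ≤ g t) (hg1 : ∀ t, g t ≤ 1)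
    (hfm : ∀ s t : ℝ, |s| ≤ |t| → f t ≤ f s) (hgm : ∀ s t : ℝ, |s| ≤ |t| → g t ≤ g s) :
    (∫ t, f t ∂ν) * (∫ t, g t ∂ν) ≤ ∫ t, f t * g t ∂ν := by
  have habs : ∀ (h : ℝ → ℝ), (∀ t, 0 ≤ h t) → (∀ t, h t ≤ 1) → ∀ t, |h t| ≤ 1 :=
    fun h h0 h1 t => abs_le.2 ⟨by linarith [h0 t], h1 t⟩
  have hP : True := trivial
  have i11 : Integrable (fun p : ℝ × ℝ => f p.1 * g p.1) (ν.prod ν) :=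
    integrable_of_bdd ((hf.comp measurable_fst).mul (hg.comp measurable_fst))
      (fun p => by
        rw [abs_mul]
        exact mul_le_one₀ (habs f hf0 hf1 p.1) (abs_nonneg _) (habs g hg0 hg1 p.1))
  have i12 : Integrable (fun p : ℝ × ℝ => f p.1 * g p.2) (ν.prod ν) :=
    integrable_of_bdd ((hf.comp measurable_fst).mul (hg.comp measurable_snd))
      (fun p => by
        rw [abs_mul]
        exact mul_le_one₀ (habs f hf0 hf1 p.1) (abs_nonneg _) (habs g hg0 hg1 p.2))
  have i21 : Integrable (fun p : ℝ × ℝ => f p.2 * g p.1) (ν.prod ν) :=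
    integrable_of_bdd ((hf.comp measurable_snd).mul (hg.comp measurable_fst))
      (fun p => by
        rw [abs_mul]
        exact mul_le_one₀ (habs f hf0 hf1 p.2) (abs_nonneg _) (habs g hg0 hg1 p.1))
  have i22 : Integrable (fun p : ℝ × ℝ => f p.2 * g p.2) (ν.prod ν) :=
    integrable_of_bdd ((hf.comp measurable_snd).mul (hg.comp measurable_snd))
      (fun p => by
        rw [abs_mul]
        exact mul_le_one₀ (habs f hf0 hf1 p.2) (abs_nonneg _) (habs g hg0 hg1 p.2))
  have key : 0 ≤ ∫ p : ℝ × ℝ, (f p.1 - f p.2) * (g p.1 - g p.2) ∂(ν.prod ν) := by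
    refine integral_nonneg fun p => ?_
    rcases le_total |p.1| |p.2| with h | h
    · exact mul_nonneg (sub_nonneg.2 (hfm _ _ h)) (sub_nonneg.2 (hgm _ _ h))
    · have h1 : f p.1 - f p.2 ≤ 0 := by linarith [hfm _ _ h]
      have h2 : g p.1 - g p.2 ≤ 0 := by linarith [hgm _ _ h]
      have := mul_nonneg (neg_nonneg.mpr h1) (neg_nonneg.mpr h2)
      rwa [neg_mul_neg] at this
  have expand : (fun p : ℝ × ℝ => (f p.1 - f p.2) * (g p.1 - g p.2)) =
      fun p : ℝ × ℝ => ((f p.1 * g p.1 - f p.1 * g p.2) - f p.2 * g p.1) + f p.2 * g p.2 := by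
    funext p; ring
  have iB : Integrable (fun p : ℝ × ℝ => f p.1 * g p.1 - f p.1 * g p.2) (ν.prod ν) := i11.sub i12
  have iA : Integrable (fun p : ℝ × ℝ => f p.1 * g p.1 - f p.1 * g p.2 - f p.2 * g p.1) (ν.prod ν) :=
    iB.sub i21
  rw [expand, integral_add iA i22, integral_sub iB i21, integral_sub i11 i12] at key
  have h11 : ∫ p : ℝ × ℝ, f p.1 * g p.1 ∂(ν.prod ν) = ∫ t, f t * g t ∂ν := by
    calc ∫ p : ℝ × ℝ, f p.1 * g p.1 ∂(ν.prod ν)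
        = ∫ p : ℝ × ℝ, (fun t => f t * g t) p.1 * (fun _ : ℝ => (1:ℝ)) p.2 ∂(ν.prod ν) := by simp
      _ = (∫ t, f t * g t ∂ν) * ∫ _t : ℝ, (1:ℝ) ∂ν := integral_prod_mul (fun t => f t * g t) (fun _ : ℝ => (1:ℝ))
      _ = ∫ t, f t * g t ∂ν := by simp
  have h22 : ∫ p : ℝ × ℝ, f p.2 * g p.2 ∂(ν.prod ν) = ∫ t, f t * g t ∂ν := by
    calc ∫ p : ℝ × ℝ, f p.2 * g p.2 ∂(ν.prod ν)
        = ∫ p : ℝ × ℝ, (fun _ : ℝ => (1:ℝ)) p.1 * (fun t => f t * g t) p.2 ∂(ν.prod ν) := by simp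
      _ = (∫ _t : ℝ, (1:ℝ) ∂ν) * ∫ t, f t * g t ∂ν := integral_prod_mul (fun _ : ℝ => (1:ℝ)) (fun t => f t * g t)
      _ = ∫ t, f t * g t ∂ν := by simp
  have h12 : ∫ p : ℝ × ℝ, f p.1 * g p.2 ∂(ν.prod ν) = (∫ t, f t ∂ν) * ∫ t, g t ∂ν :=
    integral_prod_mul f g
  have h21 : ∫ p : ℝ × ℝ, f p.2 * g p.1 ∂(ν.prod ν) = (∫ t, g t ∂ν) * ∫ t, f t ∂ν := by
    calc ∫ p : ℝ × ℝ, f p.2 * g p.1 ∂(ν.prod ν)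
        = ∫ p : ℝ × ℝ, g p.1 * f p.2 ∂(ν.prod ν) := by congr 1; funext p; ring
      _ = (∫ t, g t ∂ν) * ∫ t, f t ∂ν := integral_prod_mul g f
  rw [h11, h22, h12, h21] at key
  linarith
end Cheb

section Gauss
open ProbabilityTheory

noncomputable def gaussMeasure (n : ℕ) : Measure (Fin n → ℝ) :=
  Measure.pi fun _ => gaussianReal 0 1

instance (n : ℕ) : IsProbabilityMeasure (gaussMeasure n) := by
  unfold gaussMeasure; infer_instance

def Uncond {n : ℕ} (A : Set (Fin n → ℝ)) : Prop :=
  ∀ x ∈ A, ∀ ε : Fin n → ℝ, (∀ i, ε i = 1 ∨ ε i = -1) → (fun i => ε i * x i) ∈ A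

def snc {n : ℕ} (y : Fin n → ℝ) (t : ℝ) : Fin (n+1) → ℝ := Fin.snoc y t

@[simp] lemma snc_last {n : ℕ} (y : Fin n → ℝ) (t : ℝ) : snc y t (Fin.last n) = t := by
  simp [snc]

@[simp] lemma snc_castSucc {n : ℕ} (y : Fin n → ℝ) (t : ℝ) (k : Fin n) :
    snc y t (Fin.castSucc k) = y k := by
  simp [snc]

def sec {n : ℕ} (A : Set (Fin (n+1) → ℝ)) (t : ℝ) : Set (Fin n → ℝ) :=
  {y | snc y t ∈ A}

variable {n : ℕ} {A : Set (Fin (n+1) → ℝ)} {t s : ℝ}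

lemma sec_inter (B : Set (Fin (n+1) → ℝ)) (t : ℝ) :
    sec (A ∩ B) t = sec A t ∩ sec B t := rfl

noncomputable abbrev eqv (n : ℕ) :=
  MeasurableEquiv.piFinSuccAbove (fun _ : Fin (n+1) => ℝ) (Fin.last n)

lemma sec_eq_preimage (t : ℝ) :
    Prod.mk t ⁻¹' ((eqv n).symm ⁻¹' A) = sec A t := by
  ext y
  simp only [sec, snc, Set.mem_preimage, MeasurableEquiv.piFinSuccAbove_symm_apply,
    Fin.insertNth_last']
  rw [Fin.insertNthEquiv_last]
  exact Iff.rfl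

lemma sec_measurable (hA : MeasurableSet A) (t : ℝ) : MeasurableSet (sec A t) := by
  rw [← sec_eq_preimage t]
  exact measurable_prodMk_left ((eqv n).symm.measurable hA)

lemma sec_convex (hA : Convex ℝ A) (t : ℝ) : Convex ℝ (sec A t) := by
  intro y₁ hy₁ y₂ hy₂ a b ha hb hab
  have h : snc (a • y₁ + b • y₂) t =
      a • snc y₁ t + b • snc y₂ t := by
    funext j
    refine Fin.lastCases ?_ (fun k => ?_) j
    · simp only [snc_last, Pi.add_apply, Pi.smul_apply, smul_eq_mul]
      first
      | linear_combination (-t) * hab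
      | linear_combination t * hab
    · simp
  show snc (a • y₁ + b • y₂) t ∈ A
  rw [h]
  exact hA hy₁ hy₂ ha hb hab

lemma sec_uncond (hA : Uncond A) (t : ℝ) : Uncond (sec A t) := by
  intro y hy ε hε
  have h := hA _ hy (snc ε 1) ?_
  · have he : (fun j => snc ε 1 j * snc y t j) = snc (fun i => ε i * y i) t := by
      funext j
      refine Fin.lastCases ?_ (fun k => ?_) j
      · simp
      · simp
    show snc (fun i => ε i * y i) t ∈ A
    rwa [he] at h
  · intro j
    refine Fin.lastCases ?_ (fun k => ?_) j
    · left; simp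
    · simpa using hε k

lemma sec_neg (hA : Uncond A) (t : ℝ) : sec A t ⊆ sec A (-t) := by
  intro y hy
  have h := hA _ hy (snc (fun _ => 1) (-1)) ?_
  · have he : (fun j => snc (fun _ => (1:ℝ)) (-1) j * snc y t j) = snc y (-t) := by
      funext j
      refine Fin.lastCases ?_ (fun k => ?_) j
      · simp
      · simp
    show snc y (-t) ∈ A
    rwa [he] at h
  · intro j
    refine Fin.lastCases ?_ (fun k => ?_) j
    · right; simp
    · left; simp

lemma sec_nested (hco : Convex ℝ A) (hA : Uncond A) (h : |t| ≤ |s|) :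
    sec A s ⊆ sec A t := by
  intro y hy
  have h1 : y ∈ sec A |s| := by
    rcases abs_choice s with hs | hs
    · rwa [hs]
    · rw [hs]; exact sec_neg hA s hy
  have h2 : y ∈ sec A (-|s|) := sec_neg hA _ h1
  have ht : t ∈ Set.Icc (-|s|) |s| := by
    rcases abs_le.mp h with ⟨h3, h4⟩
    exact ⟨h3, h4⟩
  rw [← segment_eq_Icc (neg_le_self (abs_nonneg s))] at ht
  obtain ⟨a, b, ha, hb, hab, habt⟩ := ht
  have he : snc y t =
      a • snc y (-|s|) + b • snc y |s| := by
    funext j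
    refine Fin.lastCases ?_ (fun k => ?_) j
    · simp only [snc_last, Pi.add_apply, Pi.smul_apply, smul_eq_mul]
      simp only [smul_eq_mul] at habt
      first
      | linear_combination - habt
      | linear_combination habt
    · simp only [snc_castSucc, Pi.add_apply, Pi.smul_apply, smul_eq_mul]
      first
      | linear_combination (-(y k)) * hab
      | linear_combination (y k) * hab
  show snc y t ∈ A
  rw [he]
  exact hco h2 h1 ha hb hab

lemma gauss_fubini (hA : MeasurableSet A) :
    gaussMeasure (n+1) A = ∫⁻ t, gaussMeasure n (sec A t) ∂(gaussianReal 0 1) := by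
  have hmp : MeasurePreserving (eqv n) (gaussMeasure (n+1))
      ((gaussianReal 0 1).prod (gaussMeasure n)) :=
    measurePreserving_piFinSuccAbove (fun _ : Fin (n+1) => gaussianReal 0 1) (Fin.last n)
  have hS : MeasurableSet ((eqv n).symm ⁻¹' A) := (eqv n).symm.measurable hA
  calc gaussMeasure (n+1) A
      = gaussMeasure (n+1) ((eqv n) ⁻¹' ((eqv n).symm ⁻¹' A)) := by
        rw [show (eqv n) ⁻¹' ((eqv n).symm ⁻¹' A) = A from by ext x; simp]
    _ = ((gaussianReal 0 1).prod (gaussMeasure n)) ((eqv n).symm ⁻¹' A) :=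
        hmp.measure_preimage hS.nullMeasurableSet
    _ = ∫⁻ t, gaussMeasure n (Prod.mk t ⁻¹' ((eqv n).symm ⁻¹' A)) ∂(gaussianReal 0 1) :=
        Measure.prod_apply hS
    _ = ∫⁻ t, gaussMeasure n (sec A t) ∂(gaussianReal 0 1) := by
        simp_rw [sec_eq_preimage]

lemma measurable_gauss_sec (hA : MeasurableSet A) :
    Measurable fun t => gaussMeasure n (sec A t) := by
  have := measurable_measure_prodMk_left (ν := gaussMeasure n) ((eqv n).symm.measurable hA)
  simpa only [sec_eq_preimage] using this

end Gauss

section Main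
open ProbabilityTheory

theorem gauss_corr (n : ℕ) : ∀ (A B : Set (Fin n → ℝ)), MeasurableSet A → MeasurableSet B →
    Convex ℝ A → Convex ℝ B → Uncond A → Uncond B →
    gaussMeasure n A * gaussMeasure n B ≤ gaussMeasure n (A ∩ B) := by
  induction n with
  | zero =>
    intro A B hAm hBm _ _ _ _
    rcases Set.eq_empty_or_nonempty A with hA0 | hA0
    · simp [hA0]
    rcases Set.eq_empty_or_nonempty B with hB0 | hB0
    · simp [hB0]
    have hAu : A = Set.univ := by
      ext z
      simp only [Set.mem_univ, iff_true]
      obtain ⟨w, hw⟩ := hA0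
      rwa [Subsingleton.elim z w]
    have hBu : B = Set.univ := by
      ext z
      simp only [Set.mem_univ, iff_true]
      obtain ⟨w, hw⟩ := hB0
      rwa [Subsingleton.elim z w]
    rw [hAu, hBu]
    simp
  | succ n ih =>
    intro A B hAm hBm hAc hBc hAu hBu
    set γ := gaussianReal 0 1 with hγ
    set a : ℝ → ℝ := fun t => (gaussMeasure n (sec A t)).toReal with haDef
    set b : ℝ → ℝ := fun t => (gaussMeasure n (sec B t)).toReal with hbDef
    have ha_meas : Measurable a := (measurable_gauss_sec hAm).ennreal_toReal
    have hb_meas : Measurable b := (measurable_gauss_sec hBm).ennreal_toReal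
    have ha0 : ∀ t, 0 ≤ a t := fun t => ENNReal.toReal_nonneg
    have hb0 : ∀ t, 0 ≤ b t := fun t => ENNReal.toReal_nonneg
    have ha1 : ∀ t, a t ≤ 1 := by
      intro t
      have h1 : gaussMeasure n (sec A t) ≤ 1 := prob_le_one
      simpa using ENNReal.toReal_mono ENNReal.one_ne_top h1
    have hb1 : ∀ t, b t ≤ 1 := by
      intro t
      have h1 : gaussMeasure n (sec B t) ≤ 1 := prob_le_one
      simpa using ENNReal.toReal_mono ENNReal.one_ne_top h1
    have ham : ∀ s t : ℝ, |s| ≤ |t| → a t ≤ a s := fun s t h =>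
      ENNReal.toReal_mono (measure_ne_top _ _) (measure_mono (sec_nested hAc hAu h))
    have hbm : ∀ s t : ℝ, |s| ≤ |t| → b t ≤ b s := fun s t h =>
      ENNReal.toReal_mono (measure_ne_top _ _) (measure_mono (sec_nested hBc hBu h))
    have hoa : ∀ t, ENNReal.ofReal (a t) = gaussMeasure n (sec A t) := fun t =>
      ENNReal.ofReal_toReal (measure_ne_top _ _)
    have hob : ∀ t, ENNReal.ofReal (b t) = gaussMeasure n (sec B t) := fun t =>
      ENNReal.ofReal_toReal (measure_ne_top _ _)
    have intA : Integrable a γ := integrable_of_bdd ha_meas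
      (fun t => abs_le.2 ⟨by linarith [ha0 t], ha1 t⟩)
    have intB : Integrable b γ := integrable_of_bdd hb_meas
      (fun t => abs_le.2 ⟨by linarith [hb0 t], hb1 t⟩)
    have intAB : Integrable (fun t => a t * b t) γ := integrable_of_bdd (ha_meas.mul hb_meas)
      (fun t => by
        rw [abs_mul]
        exact mul_le_one₀ (abs_le.2 ⟨by linarith [ha0 t], ha1 t⟩) (abs_nonneg _)
          (abs_le.2 ⟨by linarith [hb0 t], hb1 t⟩))
    have lA : gaussMeasure (n+1) A = ENNReal.ofReal (∫ t, a t ∂γ) := by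
      rw [gauss_fubini hAm, ofReal_integral_eq_lintegral_ofReal intA
        (Filter.Eventually.of_forall ha0)]
      exact lintegral_congr fun t => (hoa t).symm
    have lB : gaussMeasure (n+1) B = ENNReal.ofReal (∫ t, b t ∂γ) := by
      rw [gauss_fubini hBm, ofReal_integral_eq_lintegral_ofReal intB
        (Filter.Eventually.of_forall hb0)]
      exact lintegral_congr fun t => (hob t).symm
    calc gaussMeasure (n+1) A * gaussMeasure (n+1) B
        = ENNReal.ofReal ((∫ t, a t ∂γ) * ∫ t, b t ∂γ) := by
          rw [lA, lB, ENNReal.ofReal_mul (integral_nonneg ha0)]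
      _ ≤ ENNReal.ofReal (∫ t, a t * b t ∂γ) :=
          ENNReal.ofReal_le_ofReal (cheb ha_meas hb_meas ha0 ha1 hb0 hb1 ham hbm)
      _ = ∫⁻ t, ENNReal.ofReal (a t * b t) ∂γ :=
          ofReal_integral_eq_lintegral_ofReal intAB
            (Filter.Eventually.of_forall fun t => mul_nonneg (ha0 t) (hb0 t))
      _ ≤ ∫⁻ t, gaussMeasure n (sec A t ∩ sec B t) ∂γ := by
          refine lintegral_mono fun t => ?_
          rw [ENNReal.ofReal_mul (ha0 t), hoa t, hob t]
          exact ih (sec A t) (sec B t) (sec_measurable hAm t) (sec_measurable hBm t)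
            (sec_convex hAc t) (sec_convex hBc t) (sec_uncond hAu t) (sec_uncond hBu t)
      _ = gaussMeasure (n+1) (A ∩ B) := by
          rw [gauss_fubini (hAm.inter hBm)]
          simp_rw [sec_inter]
          rfl

end Main

section Density
open ProbabilityTheory

lemma map_withDensity {α β : Type*} [MeasurableSpace α] [MeasurableSpace β]
    (e : α ≃ᵐ β) (μ : Measure α) (f : β → ℝ≥0∞) (hf : Measurable f) :
    Measure.map e (μ.withDensity (fun x => f (e x))) = (Measure.map e μ).withDensity f := by
  refine Measure.ext fun s hs => ?_
  rw [Measure.map_apply e.measurable hs, withDensity_apply _ hs,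
    withDensity_apply _ (e.measurable hs), setLIntegral_map hs hf e.measurable]

lemma prod_withDensity {α β : Type*} [MeasurableSpace α] [MeasurableSpace β]
    (μ : Measure α) (ν : Measure β) [SigmaFinite μ] [SigmaFinite ν]
    (f : α → ℝ≥0∞) (g : β → ℝ≥0∞) (hf : Measurable f) (hg : Measurable g)
    (h1 : SigmaFinite (μ.withDensity f)) (h2 : SigmaFinite (ν.withDensity g)) :
    (μ.withDensity f).prod (ν.withDensity g) =
      (μ.prod ν).withDensity (fun p => f p.1 * g p.2) := by
  refine Measure.prod_eq fun s t hs ht => ?_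
  rw [withDensity_apply _ (hs.prod ht), ← Measure.prod_restrict,
    lintegral_prod_mul hf.aemeasurable hg.aemeasurable,
    withDensity_apply _ hs, withDensity_apply _ ht]

noncomputable def densPi (n : ℕ) (x : Fin n → ℝ) : ℝ≥0∞ :=
  ENNReal.ofReal ((2 * π) ^ (-(n : ℝ)/2) * Real.exp (-(∑ i, x i ^ 2)/2))

lemma densPi_measurable (n : ℕ) : Measurable (densPi n) := by
  apply Measurable.ennreal_ofReal
  apply Measurable.const_mul
  apply Real.measurable_exp.comp
  apply Measurable.div_const
  apply Measurable.neg
  exact Finset.measurable_sum _ fun i _ => (measurable_pi_apply i).pow_const 2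

noncomputable def dens1 (t : ℝ) : ℝ≥0∞ :=
  ENNReal.ofReal ((2 * π) ^ (-(1 : ℝ)/2) * Real.exp (-t ^ 2/2))

lemma dens1_measurable : Measurable dens1 := by
  apply Measurable.ennreal_ofReal
  apply Measurable.const_mul
  exact Real.measurable_exp.comp ((measurable_id.pow_const 2).neg.div_const 2)

lemma gaussianReal_eq_withDensity :
    gaussianReal 0 1 = (volume : Measure ℝ).withDensity dens1 := by
  rw [gaussianReal_of_var_ne_zero _ one_ne_zero]
  congr 1
  funext x
  unfold gaussianPDF gaussianPDFReal dens1
  congr 1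
  have h2π : (0:ℝ) < 2 * π := by positivity
  rw [show ((1:ℝ≥0) : ℝ) = (1:ℝ) from rfl]
  rw [mul_one, Real.sqrt_eq_rpow, ← Real.rpow_neg_one, ← Real.rpow_natCast,
    ← Real.rpow_mul h2π.le]
  norm_num

lemma eqv_symm_apply {n : ℕ} (t : ℝ) (y : Fin n → ℝ) : (eqv n).symm (t, y) = snc y t := by
  show (Fin.insertNthEquiv (fun _ => ℝ) (Fin.last n)) (t, y) = snc y t
  rw [Fin.insertNthEquiv_last]
  rfl

lemma dens_split {n : ℕ} (t : ℝ) (y : Fin n → ℝ) :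
    dens1 t * densPi n y = densPi (n+1) (snc y t) := by
  unfold dens1 densPi
  have h2π : (0:ℝ) < 2 * π := by positivity
  rw [← ENNReal.ofReal_mul (by positivity)]
  congr 1
  have hsum : ∑ i, (snc y t i) ^ 2 = (∑ k, y k ^ 2) + t ^ 2 := by
    rw [Fin.sum_univ_castSucc]
    simp
  rw [hsum, mul_mul_mul_comm, ← Real.rpow_add h2π, ← Real.exp_add]
  push_cast
  congr 1
  · congr 1
    ring
  · congr 1
    ring

lemma gaussMeasure_eq (n : ℕ) :
    gaussMeasure n = (volume : Measure (Fin n → ℝ)).withDensity (densPi n) := by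
  induction n with
  | zero =>
    have hdens : densPi 0 = (1 : (Fin 0 → ℝ) → ℝ≥0∞) := by
      funext x
      unfold densPi
      norm_num
    rw [hdens, withDensity_one]
    refine Measure.ext fun s _ => ?_
    rcases Set.eq_empty_or_nonempty s with h | h
    · simp [h]
    · have hu : s = Set.univ := by
        ext z
        simp only [Set.mem_univ, iff_true]
        obtain ⟨w, hw⟩ := h
        rwa [Subsingleton.elim z w]
      rw [hu]
      have h1 : gaussMeasure 0 Set.univ = 1 := measure_univ
      have h2 : (volume : Measure (Fin 0 → ℝ)) Set.univ = 1 := by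
        rw [show (volume : Measure (Fin 0 → ℝ)) = Measure.pi (fun _ => volume) from rfl,
          Measure.pi_univ]
        simp
      rw [h1, h2]
  | succ n ih =>
    have hmp : MeasurePreserving (eqv n) (gaussMeasure (n+1))
        ((gaussianReal 0 1).prod (gaussMeasure n)) :=
      measurePreserving_piFinSuccAbove (fun _ : Fin (n+1) => gaussianReal 0 1) (Fin.last n)
    have hvol : MeasurePreserving (eqv n).symm
        ((volume : Measure (ℝ × (Fin n → ℝ)))) (volume : Measure (Fin (n+1) → ℝ)) :=
      (volume_preserving_piFinSuccAbove (fun _ : Fin (n+1) => ℝ) (Fin.last n)).symm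
    haveI hsf1 : SigmaFinite ((volume : Measure ℝ).withDensity dens1) := by
      rw [← gaussianReal_eq_withDensity]; infer_instance
    haveI hsf2 : SigmaFinite ((volume : Measure (Fin n → ℝ)).withDensity (densPi n)) := by
      rw [← ih]; infer_instance
    calc gaussMeasure (n+1)
        = Measure.map (eqv n).symm ((gaussianReal 0 1).prod (gaussMeasure n)) :=
          (hmp.symm _).map_eq.symm
      _ = Measure.map (eqv n).symm
            (((volume : Measure ℝ).withDensity dens1).prod
              ((volume : Measure (Fin n → ℝ)).withDensity (densPi n))) := by
          rw [← gaussianReal_eq_withDensity, ← ih]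
      _ = Measure.map (eqv n).symm
            (((volume : Measure ℝ).prod volume).withDensity
              (fun p => dens1 p.1 * densPi n p.2)) := by
          rw [prod_withDensity _ _ _ _ dens1_measurable (densPi_measurable n) hsf1 hsf2]
      _ = Measure.map (eqv n).symm
            (((volume : Measure ℝ).prod volume).withDensity
              (fun p => densPi (n+1) ((eqv n).symm p))) := by
          have hfe : (fun p : ℝ × (Fin n → ℝ) => dens1 p.1 * densPi n p.2) =
              fun p => densPi (n+1) ((eqv n).symm p) := by
            funext p
            rw [dens_split]
            exact congrArg (densPi (n+1)) (eqv_symm_apply p.1 p.2).symm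
          rw [hfe]
      _ = (Measure.map (eqv n).symm ((volume : Measure ℝ).prod volume)).withDensity
            (densPi (n+1)) :=
          map_withDensity (eqv n).symm _ _ (densPi_measurable (n+1))
      _ = (volume : Measure (Fin (n+1) → ℝ)).withDensity (densPi (n+1)) := by
          rw [← Measure.volume_eq_prod, hvol.map_eq]

end Density

lemma stdGaussian_eq_gauss (n : ℕ) (A : Set (EuclideanSpace ℝ (Fin n)))
    (hA : MeasurableSet A) :
    stdGaussian n A =
      gaussMeasure n (((MeasurableEquiv.toLp 2 (Fin n → ℝ)).symm).symm ⁻¹' A) := by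
  set E := (MeasurableEquiv.toLp 2 (Fin n → ℝ)).symm with hE
  have hS : MeasurableSet (E.symm ⁻¹' A) := E.symm.measurable hA
  rw [gaussMeasure_eq, stdGaussian, withDensity_apply _ hA, withDensity_apply _ hS]
  have hmp : MeasurePreserving E.symm (volume : Measure (Fin n → ℝ)) volume :=
    (EuclideanSpace.volume_preserving_symm_measurableEquiv_toLp (Fin n)).symm
  rw [← hmp.setLIntegral_comp_preimage_emb E.symm.measurableEmbedding _ A]
  refine setLIntegral_congr_fun hS (fun x _ => ?_)
  have hnorm : ‖E.symm x‖ ^ 2 = ∑ i, x i ^ 2 := by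
    rw [show E.symm x = WithLp.toLp 2 x from rfl]
    rw [EuclideanSpace.norm_eq, Real.sq_sqrt (by positivity)]
    refine Finset.sum_congr rfl fun i _ => ?_
    rw [PiLp.toLp_apply, Real.norm_eq_abs, sq_abs]
  rw [hnorm]
  rfl

theorem stmt_15 (n : ℕ) (A B : Set (EuclideanSpace ℝ (Fin n)))
    (hAcl : IsClosed A) (hAco : Convex ℝ A) (hAsym : ∀ x ∈ A, -x ∈ A)
    (hBcl : IsClosed B) (hBco : Convex ℝ B) (hBsym : ∀ x ∈ B, -x ∈ B)
    (hAunc : ∀ x ∈ A, ∀ ε : Fin n → ℝ, (∀ i, ε i = 1 ∨ ε i = -1) →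
      (WithLp.toLp 2 (fun i => ε i * x i)) ∈ A)
    (hBunc : ∀ x ∈ B, ∀ ε : Fin n → ℝ, (∀ i, ε i = 1 ∨ ε i = -1) →
      (WithLp.toLp 2 (fun i => ε i * x i)) ∈ B) :
    stdGaussian n (A ∩ B) ≥ stdGaussian n A * stdGaussian n B := by
  set E := (MeasurableEquiv.toLp 2 (Fin n → ℝ)).symm with hE
  have hAm : MeasurableSet A := hAcl.measurableSet
  have hBm : MeasurableSet B := hBcl.measurableSet
  set SA := E.symm ⁻¹' A with hSA
  set SB := E.symm ⁻¹' B with hSB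
  have hSAm : MeasurableSet SA := E.symm.measurable hAm
  have hSBm : MeasurableSet SB := E.symm.measurable hBm
  have hSAc : Convex ℝ SA := by
    intro y₁ h1 y₂ h2 a b ha hb hab
    show E.symm (a • y₁ + b • y₂) ∈ A
    exact hAco h1 h2 ha hb hab
  have hSBc : Convex ℝ SB := by
    intro y₁ h1 y₂ h2 a b ha hb hab
    show E.symm (a • y₁ + b • y₂) ∈ B
    exact hBco h1 h2 ha hb hab
  have hSAu : Uncond SA := by
    intro x hx ε hε
    show E.symm (fun i => ε i * x i) ∈ A
    exact hAunc (E.symm x) hx ε hε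
  have hSBu : Uncond SB := by
    intro x hx ε hε
    show E.symm (fun i => ε i * x i) ∈ B
    exact hBunc (E.symm x) hx ε hε
  have hkey := gauss_corr n SA SB hSAm hSBm hSAc hSBc hSAu hSBu
  rw [ge_iff_le, stdGaussian_eq_gauss n A hAm, stdGaussian_eq_gauss n B hBm,
    stdGaussian_eq_gauss n (A ∩ B) (hAm.inter hBm)]
  rw [Set.preimage_inter]; exact hkey
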